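/- Let T > 0, c ∈ ℝ, R ≥ 0, and e ∈ ℝ with e − c > −1. Let J : (−T, 0) → [0, ∞) be continuous, and suppose: (i) for every t ∈ (−T, 0), limsup_{h → 0⁻} (J(t+h) − J(t))/|h| ≤ c·|t|⁻¹·J(t) + R·|t|^e; and (ii) lim_{t → 0⁻} |t|^{−c}·J(t) = 0. Then J(t) ≤ (R/(e − c + 1))·|t|^{e+1} for all t ∈ (−T, 0). -/

import Mathlib

open Set Filter

open Real in
/-- Auxiliary comparison step for `stmt13`. -/
theorem key_step (T c R e : ℝ) (hT : 0 < T) (hR : 0 ≤ R) (hec : -1 < e - c)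
    (J : ℝ → ℝ)
    (hcont : ContinuousOn J (Ioo (-T) 0))
    (hgrow : ∀ t ∈ Ioo (-T) (0 : ℝ), ∀ ε : ℝ, 0 < ε → ∃ δ : ℝ, 0 < δ ∧
      ∀ h : ℝ, h < 0 → |h| < δ → t + h ∈ Ioo (-T) (0 : ℝ) →
        (J (t + h) - J t) / |h| ≤ c * |t|⁻¹ * J t + R * |t| ^ e + ε)
    (u₀ u₁ : ℝ) (hu₀ : 0 < u₀) (hu₀₁ : u₀ < u₁) (hu₁T : u₁ < T)
    (ε : ℝ) (hε : 0 < ε) :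
    J (-u₁) ≤ u₁ ^ c * (u₀ ^ (-c) * J (-u₀)) + ((R + ε) / (e - c + 1)) * u₁ ^ (e + 1) := by
  have hu₁ : 0 < u₁ := hu₀.trans hu₀₁
  have hecpos : (0:ℝ) < e - c + 1 := by linarith
  set g : ℝ → ℝ := fun u => J (-u) with hg
  set m : ℝ := min (u₀ ^ e) (u₁ ^ e) with hmdef
  have hm : 0 < m := lt_min (rpow_pos_of_pos hu₀ e) (rpow_pos_of_pos hu₁ e)
  have hmx : ∀ x, u₀ ≤ x → x ≤ u₁ → m ≤ x ^ e := by
    intro x h1 h2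
    rcases le_or_gt 0 e with he | he
    · exact le_trans (min_le_left _ _) (rpow_le_rpow hu₀.le h1 he)
    · exact le_trans (min_le_right _ _) (rpow_le_rpow_of_nonpos (hu₀.trans_le h1) h2 he.le)
  set ε₀ : ℝ := ε * m / 2 with hε₀def
  have hε₀ : 0 < ε₀ := by positivity
  set R' : ℝ := R + ε with hR'def
  have hR' : 0 ≤ R' := by linarith
  set A₂ : ℝ := R' / (e - c + 1) with hA₂def
  have hA₂ : 0 ≤ A₂ := div_nonneg hR' hecpos.le
  set A₁ : ℝ := u₀ ^ (-c) * g u₀ - A₂ * u₀ ^ (e - c + 1) with hA₁def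
  set B : ℝ → ℝ := fun x => A₁ * x ^ c + A₂ * x ^ (e + 1) with hB
  set B' : ℝ → ℝ := fun x => A₁ * (c * x ^ (c - 1)) + A₂ * ((e + 1) * x ^ e) with hB'
  set f' : ℝ → ℝ := fun x => c * x⁻¹ * g x + R * x ^ e + ε₀ with hf'
  have hBu₀ : g u₀ ≤ B u₀ := by
    have h1 : u₀ ^ (-c) * u₀ ^ c = 1 := by
      rw [← Real.rpow_add hu₀]; simp
    have h2 : u₀ ^ (e - c + 1) * u₀ ^ c = u₀ ^ (e + 1) := by
      rw [← Real.rpow_add hu₀, show e - c + 1 + c = e + 1 by ring]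
    have : B u₀ = g u₀ := by
      simp only [hB, hA₁def]
      linear_combination g u₀ * h1 - A₂ * h2
    linarith [this]
  have hgcont : ContinuousOn g (Icc u₀ u₁) := by
    apply hcont.comp continuous_neg.continuousOn
    rintro x ⟨hx1, hx2⟩
    exact ⟨by simp; linarith, by simp; linarith⟩
  have hBcont : ContinuousOn B (Icc u₀ u₁) := by
    intro x hx
    have hx0 : x ≠ 0 := (hu₀.trans_le hx.1).ne'
    exact ((continuousAt_const.mul (Real.continuousAt_rpow_const x c (Or.inl hx0))).add
      (continuousAt_const.mul (Real.continuousAt_rpow_const x (e+1) (Or.inl hx0)))).continuousWithinAt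
  have hB'deriv : ∀ x ∈ Ico u₀ u₁, HasDerivWithinAt B (B' x) (Ici x) x := by
    intro x hx
    have hx0 : x ≠ 0 := (hu₀.trans_le hx.1).ne'
    have d1 : HasDerivAt (fun y : ℝ => y ^ c) (c * x ^ (c - 1)) x :=
      Real.hasDerivAt_rpow_const (Or.inl hx0)
    have d2 : HasDerivAt (fun y : ℝ => y ^ (e + 1)) ((e + 1) * x ^ e) x := by
      have := Real.hasDerivAt_rpow_const (p := e + 1) (Or.inl hx0)
      simpa using this
    exact ((d1.const_mul A₁).add (d2.const_mul A₂)).hasDerivWithinAt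
  have hf'cond : ∀ x ∈ Ico u₀ u₁, ∀ r, f' x < r → ∃ᶠ z in nhdsWithin x (Ioi x), slope g x z < r := by
    intro x hx r hr
    have hx0 : 0 < x := hu₀.trans_le hx.1
    have hxT : x < T := lt_trans hx.2 hu₁T
    have hmem : -x ∈ Ioo (-T) (0:ℝ) := ⟨by linarith, by linarith⟩
    obtain ⟨δ, hδ, hδ'⟩ := hgrow (-x) hmem ε₀ hε₀
    have hev : ∀ᶠ z in nhdsWithin x (Ioi x), slope g x z < r := by
      filter_upwards [Ioo_mem_nhdsGT_of_mem
        (⟨le_rfl, lt_min (by linarith) hxT⟩ : x ∈ Ico x (min (x + δ) T))] with z hz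
      obtain ⟨hz1, hz2⟩ := hz
      have hzδ : z < x + δ := lt_of_lt_of_le hz2 (min_le_left _ _)
      have hzT : z < T := lt_of_lt_of_le hz2 (min_le_right _ _)
      have h0 : x - z < 0 := by linarith
      have habs : |x - z| = z - x := by rw [abs_of_neg h0]; ring
      have hstep := hδ' (x - z) h0 (by rw [habs]; linarith)
        (by constructor <;> simp <;> linarith)
      have hxz : -x + (x - z) = -z := by ring
      rw [hxz, habs] at hstep
      have habsx : |(-x)| = x := by rw [abs_neg, abs_of_pos hx0]
      rw [habsx] at hstep
      have hslope : slope g x z = (J (-z) - J (-x)) / (z - x) := by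
        rw [slope_def_field]
      calc slope g x z = (J (-z) - J (-x)) / (z - x) := hslope
        _ ≤ c * x⁻¹ * J (-x) + R * x ^ e + ε₀ := hstep
        _ < r := hr
    exact hev.frequently
  have hbound : ∀ x ∈ Ico u₀ u₁, g x = B x → f' x < B' x := by
    intro x hx hfB
    have hx0 : 0 < x := hu₀.trans_le hx.1
    have hR'A : A₂ * (e - c + 1) = R' := by
      rw [hA₂def]; field_simp
    have hBx : B' x = c * x⁻¹ * B x + R' * x ^ e := by
      simp only [hB, hB']
      have e1 : x ^ (c - 1) = x ^ c * x⁻¹ := by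
        rw [Real.rpow_sub hx0, Real.rpow_one]; ring
      have e2 : x ^ e = x ^ (e + 1) * x⁻¹ := by
        rw [Real.rpow_add hx0, Real.rpow_one]; field_simp
      rw [e1, e2]
      linear_combination (x ^ (e + 1) * x⁻¹) * hR'A
    rw [hBx, ← hfB]
    have hmle : m ≤ x ^ e := hmx x hx.1 hx.2.le
    have h1 : ε * m ≤ ε * x ^ e := mul_le_mul_of_nonneg_left hmle hε.le
    have h2 : 0 < ε * m := mul_pos hε hm
    simp only [hf', hR'def]
    nlinarith
  have main : g u₁ ≤ B u₁ :=
    image_le_of_liminf_slope_right_lt_deriv_boundary' hgcont hf'cond hBu₀ hBcont hB'deriv hbound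
      (right_mem_Icc.2 hu₀₁.le)
  have hA₁le : A₁ ≤ u₀ ^ (-c) * g u₀ :=
    sub_le_self _ (mul_nonneg hA₂ (Real.rpow_nonneg hu₀.le _))
  have hfin : B u₁ ≤ u₁ ^ c * (u₀ ^ (-c) * g u₀) + A₂ * u₁ ^ (e + 1) := by
    simp only [hB]
    have := Real.rpow_nonneg hu₁.le c
    nlinarith
  calc J (-u₁) = g u₁ := rfl
    _ ≤ B u₁ := main
    _ ≤ u₁ ^ c * (u₀ ^ (-c) * g u₀) + A₂ * u₁ ^ (e + 1) := hfin
    _ = u₁ ^ c * (u₀ ^ (-c) * J (-u₀)) + ((R + ε) / (e - c + 1)) * u₁ ^ (e + 1) := by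
        rw [hA₂def, hR'def]

/-- Singular Gronwall-type lemma: if `J : (−T,0) → [0,∞)` is continuous, its
left-sided upper derivative satisfies
`limsup_{h→0⁻} (J(t+h)−J(t))/|h| ≤ c|t|⁻¹ J(t) + R|t|^e` (stated here in
ε-form), `e − c > −1`, and `|t|^{−c} J(t) → 0` as `t → 0⁻`, then
`J(t) ≤ (R/(e−c+1)) |t|^{e+1}` on `(−T,0)`. -/
theorem stmt13 (T c R e : ℝ) (hT : 0 < T) (hR : 0 ≤ R) (hec : -1 < e - c)
    (J : ℝ → ℝ)
    (hcont : ContinuousOn J (Ioo (-T) 0))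
    (hnonneg : ∀ t ∈ Ioo (-T) (0 : ℝ), 0 ≤ J t)
    (hgrow : ∀ t ∈ Ioo (-T) (0 : ℝ), ∀ ε : ℝ, 0 < ε → ∃ δ : ℝ, 0 < δ ∧
      ∀ h : ℝ, h < 0 → |h| < δ → t + h ∈ Ioo (-T) (0 : ℝ) →
        (J (t + h) - J t) / |h| ≤ c * |t|⁻¹ * J t + R * |t| ^ e + ε)
    (hlim : Tendsto (fun t => |t| ^ (-c) * J t) (nhdsWithin 0 (Iio 0)) (nhds 0)) :
    ∀ t ∈ Ioo (-T) (0 : ℝ), J t ≤ (R / (e - c + 1)) * |t| ^ (e + 1) := by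
  intro t ht
  obtain ⟨ht1, ht2⟩ := ht
  have habs : |t| = -t := abs_of_neg ht2
  rw [habs]
  have hecpos : (0:ℝ) < e - c + 1 := by linarith
  set u₁ := -t with hu₁def
  have hu₁ : 0 < u₁ := by simp [hu₁def]; linarith
  have hu₁T : u₁ < T := by simp [hu₁def]; linarith
  have key : ∀ u₀ ∈ Ioo (0:ℝ) u₁,
      J (-u₁) ≤ u₁ ^ c * (u₀ ^ (-c) * J (-u₀)) + (R / (e - c + 1)) * u₁ ^ (e + 1) := by
    rintro u₀ ⟨h1, h2⟩
    refine le_of_forall_pos_le_add ?_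
    intro η hη
    have hpow : (0:ℝ) < u₁ ^ (e + 1) := Real.rpow_pos_of_pos hu₁ _
    set ε := η * (e - c + 1) / u₁ ^ (e + 1) with hε
    have hεpos : 0 < ε := by positivity
    have hks := key_step T c R e hT hR hec J hcont hgrow u₀ u₁ h1 h2 hu₁T ε hεpos
    have heq : ((R + ε) / (e - c + 1)) * u₁ ^ (e + 1)
        = (R / (e - c + 1)) * u₁ ^ (e + 1) + η := by
      rw [hε]; field_simp
    linarith [hks]
  have hneg : Tendsto (fun u : ℝ => -u) (nhdsWithin 0 (Ioi 0)) (nhdsWithin 0 (Iio 0)) := by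
    apply tendsto_nhdsWithin_of_tendsto_nhds_of_eventually_within
    · simpa using (continuous_neg.tendsto (0:ℝ)).mono_left nhdsWithin_le_nhds
    · filter_upwards [self_mem_nhdsWithin] with u hu
      simpa using hu
  have hK : Tendsto (fun u : ℝ => u ^ (-c) * J (-u)) (nhdsWithin 0 (Ioi 0)) (nhds 0) := by
    have h2 := hlim.comp hneg
    apply Filter.Tendsto.congr' _ h2
    filter_upwards [self_mem_nhdsWithin] with u hu
    have habs2 : |(-u)| = u := by rw [abs_neg, abs_of_pos hu]
    simp [Function.comp, habs2]
  have hfinal : Tendsto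
      (fun u₀ : ℝ => u₁ ^ c * (u₀ ^ (-c) * J (-u₀)) + (R / (e - c + 1)) * u₁ ^ (e + 1))
      (nhdsWithin 0 (Ioi 0)) (nhds (u₁ ^ c * 0 + (R / (e - c + 1)) * u₁ ^ (e + 1))) :=
    (tendsto_const_nhds.mul hK).add tendsto_const_nhds
  have hJt : J t = J (-u₁) := by rw [hu₁def]; simp
  rw [hJt]
  have hev : ∀ᶠ u₀ in nhdsWithin (0:ℝ) (Ioi 0),
      J (-u₁) ≤ u₁ ^ c * (u₀ ^ (-c) * J (-u₀)) + (R / (e - c + 1)) * u₁ ^ (e + 1) := by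
    filter_upwards [Ioo_mem_nhdsGT_of_mem (⟨le_rfl, hu₁⟩ : (0:ℝ) ∈ Ico 0 u₁)] with u₀ h
    exact key u₀ h
  have hle : J (-u₁) ≤ u₁ ^ c * 0 + (R / (e - c + 1)) * u₁ ^ (e + 1) :=
    ge_of_tendsto hfinal hev
  linarith [hle]
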